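/- Let d ≥ 1, A ≤ 0, and for g ∈ ℝ^d, z ∈ ℂ^d define Λ_g(z) = (1−4A)^{d/4}·exp(A‖g‖₂² + √(1−4A)·(Σ_{i=1}^d g_i z_i) − (Σ_{i=1}^d z_i²)/2) ∈ ℂ. Then for all x, w ∈ ℝ^d and b ∈ ℝ, cos(⟨x,w⟩ + b) = 𝔼_{g∼N(0,I_d)}[Re(exp(ib) · Λ_g(i·x) · Λ_g(w))], where i·x ∈ ℂ^d is the entrywise multiplication of x by the imaginary unit and Λ_g(w) is real. -/

import Mathlib

open MeasureTheory ProbabilityTheory Real RealInnerProductSpace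

/-- The standard Gaussian probability measure `N(0, I_d)` on `ℝ^d`. -/
noncomputable def stdGaussian (d : ℕ) : Measure (EuclideanSpace ℝ (Fin d)) :=
  (Measure.pi fun _ => gaussianReal 0 1).map (WithLp.toLp 2)

/-- The complex-valued positive random feature map
`Λ_g(z) = (1-4A)^{d/4} exp(A‖g‖² + √(1-4A)·Σ gᵢzᵢ − (Σ zᵢ²)/2)` for `g ∈ ℝ^d`, `z ∈ ℂ^d`. -/
noncomputable def lambdaC (d : ℕ) (A : ℝ) (g : EuclideanSpace ℝ (Fin d))
    (z : Fin d → ℂ) : ℂ :=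
  (((1 - 4 * A) ^ ((d : ℝ) / 4) : ℝ) : ℂ) *
    Complex.exp (((A * ‖g‖ ^ 2 : ℝ) : ℂ)
      + ((Real.sqrt (1 - 4 * A) : ℝ) : ℂ) * (∑ i, (g i : ℂ) * z i)
      - (∑ i, z i ^ 2) / 2)

lemma integral_gaussianReal_smul' (F : ℝ → ℂ) :
    ∫ t, F t ∂(gaussianReal 0 1) = ∫ t, gaussianPDFReal 0 1 t • F t := by
  rw [gaussianReal_of_var_ne_zero _ one_ne_zero]
  have h : gaussianPDF 0 1 = fun x => ((gaussianPDFReal 0 1 x).toNNReal : ENNReal) := rfl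
  rw [h, integral_withDensity_eq_integral_smul
    ((measurable_gaussianPDFReal 0 1).real_toNNReal)]
  congr 1; ext t
  rw [NNReal.smul_def, Real.coe_toNNReal _ (gaussianPDFReal_nonneg 0 1 t)]

lemma integrable_gaussianReal_iff' (F : ℝ → ℂ) (hF : Measurable F) :
    Integrable F (gaussianReal 0 1) ↔
      Integrable (fun t => gaussianPDFReal 0 1 t • F t) volume := by
  rw [gaussianReal_of_var_ne_zero _ one_ne_zero]
  have h : gaussianPDF 0 1 = fun x => ((gaussianPDFReal 0 1 x).toNNReal : ENNReal) := rfl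
  rw [h, integrable_withDensity_iff_integrable_smul
    ((measurable_gaussianPDFReal 0 1).real_toNNReal)]
  refine integrable_congr (Filter.Eventually.of_forall fun t => ?_)
  show (gaussianPDFReal 0 1 t).toNNReal • F t = _
  rw [NNReal.smul_def, Real.coe_toNNReal _ (gaussianPDFReal_nonneg 0 1 t)]

lemma gauss_cexp (A : ℝ) (hA : A ≤ 0) (c : ℂ) :
    Integrable (fun t : ℝ => Complex.exp ((2*A:ℂ) * t^2 + c * t)) (gaussianReal 0 1) ∧
    ∫ t, Complex.exp ((2*A:ℂ) * t^2 + c * t) ∂(gaussianReal 0 1)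
      = ((Real.sqrt (1 - 4*A) : ℝ) : ℂ)⁻¹ * Complex.exp (c^2 / (2*(1 - 4*A))) := by
  have hb : ((2*A:ℂ) - 1/2).re < 0 := by
    simp only [Complex.sub_re, Complex.mul_re, Complex.ofReal_re, Complex.ofReal_im,
      Complex.div_re]
    norm_num; linarith
  have hbne : ((2*A:ℂ) - 1/2) ≠ 0 := by
    intro h; rw [h, Complex.zero_re] at hb; exact lt_irrefl 0 hb
  have hmeas : Measurable (fun t : ℝ => Complex.exp ((2*A:ℂ) * t^2 + c * t)) := by
    fun_prop
  have hpt : ∀ t : ℝ, gaussianPDFReal 0 1 t • Complex.exp ((2*A:ℂ)*t^2 + c*t)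
      = ((Real.sqrt (2*π))⁻¹ : ℝ) • Complex.exp (((2*A:ℂ)-1/2)*t^2 + c*t + 0) := by
    intro t
    rw [gaussianPDFReal]
    simp only [NNReal.coe_one, mul_one, sub_zero, add_zero]
    rw [Complex.real_smul, Complex.real_smul, Complex.ofReal_mul, Complex.ofReal_inv,
      Complex.ofReal_exp, mul_assoc, ← Complex.exp_add]
    congr 2
    push_cast
    ring
  constructor
  · rw [integrable_gaussianReal_iff' _ hmeas]
    refine Integrable.congr ?_ (Filter.Eventually.of_forall fun t => (hpt t).symm)
    exact (integrable_cexp_quadratic' hb c 0).smul ((Real.sqrt (2*π))⁻¹ : ℝ)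
  · rw [integral_gaussianReal_smul']
    simp_rw [hpt]
    rw [integral_smul, integral_cexp_quadratic hb c 0]
    have h14 : (0:ℝ) < 1 - 4*A := by linarith
    have h14c : ((1 - 4*A : ℝ) : ℂ) ≠ 0 := Complex.ofReal_ne_zero.mpr h14.ne'
    have h14c' : (1 : ℂ) - 4*A ≠ 0 := by push_cast at h14c; exact h14c
    have hcast : ((π:ℂ) / -((2*A:ℂ)-1/2)) = ((2*π/(1-4*A) : ℝ) : ℂ) := by
      push_cast
      rw [div_eq_div_iff (by intro h; apply hbne; linear_combination -h) h14c']
      ring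
    rw [hcast, show ((1:ℂ)/2) = ((1/2 : ℝ) : ℂ) by norm_num,
      ← Complex.ofReal_cpow (div_pos (by positivity) h14).le]
    rw [Complex.real_smul, ← mul_assoc, ← Complex.ofReal_mul]
    congr 1
    · rw [← Complex.ofReal_inv, Complex.ofReal_inj, ← Real.sqrt_eq_rpow,
        Real.sqrt_div (by positivity : (0:ℝ) ≤ 2*π)]
      have h2π : Real.sqrt (2*π) ≠ 0 := by positivity
      field_simp
    · congr 1
      rw [zero_sub]
      push_cast
      rw [show (4:ℂ)*(2*(A:ℂ)-1/2) = -(2*(1-4*(A:ℂ))) by ring, div_neg, neg_neg]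

theorem stmt_13 (d : ℕ) (hd : 1 ≤ d) (A : ℝ) (hA : A ≤ 0)
    (x w : EuclideanSpace ℝ (Fin d)) (b : ℝ) :
    Real.cos (⟪x, w⟫ + b) =
      ∫ g, (Complex.exp (Complex.I * b) *
          lambdaC d A g (fun j => Complex.I * (x j : ℂ)) *
          lambdaC d A g (fun j => ((w j : ℝ) : ℂ))).re ∂(stdGaussian d) := by
  have h14 : (0:ℝ) < 1 - 4*A := by linarith
  have hs2 : (Real.sqrt (1 - 4*A))^2 = 1 - 4*A := Real.sq_sqrt h14.le
  have hspos : 0 < Real.sqrt (1 - 4*A) := Real.sqrt_pos.mpr h14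
  set s : ℝ := Real.sqrt (1 - 4*A) with hs_def
  set c : Fin d → ℂ := fun i => (s:ℂ) * (Complex.I * (x i : ℂ) + (w i : ℂ)) with hc_def
  set f : Fin d → ℝ → ℂ := fun i t => Complex.exp ((2*A:ℂ)*t^2 + c i * t) with hf_def
  set C : ℂ := (((1-4*A)^((d:ℝ)/2) : ℝ) : ℂ) *
      Complex.exp (Complex.I*b + ∑ i, (((x i : ℂ))^2 - ((w i : ℂ))^2)/2) with hC_def
  have hpt : ∀ g : EuclideanSpace ℝ (Fin d),
      Complex.exp (Complex.I*b) * lambdaC d A g (fun j => Complex.I * (x j:ℂ)) *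
        lambdaC d A g (fun j => ((w j : ℝ):ℂ)) = C * ∏ i, f i (g i) := by
    intro g
    have hnorm : ‖g‖^2 = ∑ i, (g i)^2 := by
      rw [EuclideanSpace.norm_eq, Real.sq_sqrt (by positivity)]
      simp [_root_.sq_abs]
    have hK : (((1-4*A)^((d:ℝ)/4):ℝ):ℂ) * (((1-4*A)^((d:ℝ)/4):ℝ):ℂ)
        = (((1-4*A)^((d:ℝ)/2):ℝ):ℂ) := by
      rw [← Complex.ofReal_mul, ← Real.rpow_add h14]
      congr 2
      ring
    have h2 : ((A*‖g‖^2 : ℝ):ℂ) = (A:ℂ) * ∑ i, ((g i:ℂ))^2 := by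
      push_cast [hnorm]; rfl
    have e1 : ∑ i, (g i:ℂ) * (Complex.I * (x i:ℂ))
        = Complex.I * ∑ i, (g i:ℂ) * (x i:ℂ) := by
      rw [Finset.mul_sum]; exact Finset.sum_congr rfl fun i _ => by ring
    have e2 : ∑ i, (Complex.I * (x i:ℂ))^2 = -∑ i, ((x i:ℂ))^2 := by
      rw [← Finset.sum_neg_distrib]
      exact Finset.sum_congr rfl fun i _ => by rw [mul_pow, Complex.I_sq]; ring
    have eS : ∑ i, (((x i:ℂ))^2 - ((w i:ℂ))^2)/2
        = ((∑ i, ((x i:ℂ))^2) - ∑ i, ((w i:ℂ))^2)/2 := by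
      rw [← Finset.sum_div, Finset.sum_sub_distrib]
    have e4 : ∑ i, ((2*A:ℂ)*((g i:ℂ))^2 + c i * (g i:ℂ))
        = 2*(A:ℂ)*(∑ i, ((g i:ℂ))^2)
          + (s:ℂ)*(Complex.I*(∑ i, (g i:ℂ)*(x i:ℂ)) + ∑ i, (g i:ℂ)*(w i:ℂ)) := by
      rw [Finset.sum_add_distrib, ← Finset.mul_sum]
      congr 1
      calc ∑ i, c i * (g i:ℂ)
          = ∑ i, ((s:ℂ)*(Complex.I*((g i:ℂ)*(x i:ℂ))) + (s:ℂ)*((g i:ℂ)*(w i:ℂ))) :=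
            Finset.sum_congr rfl fun i _ => by rw [hc_def]; ring
        _ = (s:ℂ)*(Complex.I*(∑ i, (g i:ℂ)*(x i:ℂ)) + ∑ i, (g i:ℂ)*(w i:ℂ)) := by
            rw [Finset.sum_add_distrib, ← Finset.mul_sum, ← Finset.mul_sum,
              ← Finset.mul_sum]
            ring
    have hexp : (Complex.I*b + ((A*‖g‖^2 : ℝ) + (s:ℂ) * (∑ i, (g i:ℂ) * (Complex.I * (x i:ℂ)))
          - (∑ i, (Complex.I*(x i:ℂ))^2)/2)
          + ((A*‖g‖^2 : ℝ) + (s:ℂ) * (∑ i, (g i:ℂ) * (w i:ℂ)) - (∑ i, ((w i:ℂ))^2)/2))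
        = (Complex.I*b + ∑ i, (((x i:ℂ))^2 - ((w i:ℂ))^2)/2)
          + ∑ i, ((2*A:ℂ)*((g i:ℂ))^2 + c i * (g i:ℂ)) := by
      rw [h2, e1, e2, eS, e4]; ring
    unfold lambdaC
    rw [hC_def]
    calc Complex.exp (Complex.I*b)
          * ((((1-4*A)^((d:ℝ)/4):ℝ):ℂ) * Complex.exp (((A*‖g‖^2 : ℝ):ℂ)
              + (s:ℂ) * (∑ i, (g i:ℂ) * (Complex.I * (x i:ℂ)))
              - (∑ i, (Complex.I*(x i:ℂ))^2)/2))
          * ((((1-4*A)^((d:ℝ)/4):ℝ):ℂ) * Complex.exp (((A*‖g‖^2 : ℝ):ℂ)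
              + (s:ℂ) * (∑ i, (g i:ℂ) * ((w i:ℂ)))
              - (∑ i, ((w i:ℂ))^2)/2))
        = ((((1-4*A)^((d:ℝ)/4):ℝ):ℂ) * (((1-4*A)^((d:ℝ)/4):ℝ):ℂ))
          * Complex.exp (Complex.I*b + ((A*‖g‖^2 : ℝ) + (s:ℂ) * (∑ i, (g i:ℂ) * (Complex.I * (x i:ℂ)))
              - (∑ i, (Complex.I*(x i:ℂ))^2)/2)
              + ((A*‖g‖^2 : ℝ) + (s:ℂ) * (∑ i, (g i:ℂ) * (w i:ℂ)) - (∑ i, ((w i:ℂ))^2)/2)) := by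
          rw [Complex.exp_add, Complex.exp_add]; ring
      _ = (((1-4*A)^((d:ℝ)/2):ℝ):ℂ)
          * (Complex.exp (Complex.I*b + ∑ i, (((x i:ℂ))^2 - ((w i:ℂ))^2)/2)
            * Complex.exp (∑ i, ((2*A:ℂ)*((g i:ℂ))^2 + c i * (g i:ℂ)))) := by
          rw [hK, hexp, Complex.exp_add]
      _ = (((1-4*A)^((d:ℝ)/2):ℝ):ℂ)
          * Complex.exp (Complex.I*b + ∑ i, (((x i:ℂ))^2 - ((w i:ℂ))^2)/2)
          * ∏ i, f i (g i) := by
          rw [Complex.exp_sum, mul_assoc]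
  have hint : ∀ i, Integrable (f i) (gaussianReal 0 1) := fun i => (gauss_cexp A hA (c i)).1
  have hprod : (∫ g, (C * ∏ i, f i (g i)) ∂(stdGaussian d))
      = C * ∏ i, ∫ t, f i t ∂(gaussianReal 0 1) := by
    rw [integral_const_mul]
    congr 1
    letI : MeasureSpace ℝ := ⟨gaussianReal 0 1⟩
    haveI : SigmaFinite (volume : Measure ℝ) := by
      change SigmaFinite (gaussianReal 0 1); infer_instance
    show ∫ g, _ ∂((Measure.pi fun _ => gaussianReal 0 1).map (MeasurableEquiv.toLp 2 (Fin d → ℝ))) = _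
    rw [integral_map_equiv]
    exact MeasureTheory.integral_fintype_prod_eq_prod (ι := Fin d) f
  have hInt : Integrable (fun g : EuclideanSpace ℝ (Fin d) => C * ∏ i, f i (g i))
      (stdGaussian d) := by
    letI : MeasureSpace ℝ := ⟨gaussianReal 0 1⟩
    haveI : SigmaFinite (volume : Measure ℝ) := by
      change SigmaFinite (gaussianReal 0 1); infer_instance
    show Integrable _ ((Measure.pi fun _ => gaussianReal 0 1).map (MeasurableEquiv.toLp 2 (Fin d → ℝ)))
    rw [integrable_map_equiv]
    exact (MeasureTheory.Integrable.fintype_prod (f := f) hint).const_mul C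
  have hval : ∀ i, ∫ t, f i t ∂(gaussianReal 0 1)
      = ((s:ℝ):ℂ)⁻¹ * Complex.exp ((c i)^2/(2*(1-4*A))) := fun i => (gauss_cexp A hA (c i)).2
  have h14c : ((1-4*A:ℝ):ℂ) ≠ 0 := Complex.ofReal_ne_zero.mpr h14.ne'
  have hsne : (s:ℂ) ≠ 0 := Complex.ofReal_ne_zero.mpr hspos.ne'
  have hc2 : ∀ i, (c i)^2/(2*(1-4*(A:ℂ)))
      = (((w i:ℂ))^2 - ((x i:ℂ))^2)/2 + Complex.I * (x i) * (w i) := by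
    intro i
    have hc2' : (c i)^2 = ((1-4*A:ℝ):ℂ) * (Complex.I * (x i:ℂ) + (w i:ℂ))^2 := by
      rw [hc_def, mul_pow, ← Complex.ofReal_pow, hs2]
    have hsq : (Complex.I * (x i:ℂ) + (w i:ℂ))^2
        = -((x i:ℂ))^2 + 2*Complex.I*(x i)*(w i) + ((w i:ℂ))^2 := by
      rw [add_sq, mul_pow, Complex.I_sq]; ring
    rw [hc2', hsq]
    have h14c' : (1:ℂ) - 4*(A:ℂ) ≠ 0 := by push_cast at h14c; exact h14c
    field_simp
    push_cast
    ring
  have hinner : ⟪x, w⟫ = ∑ i, x i * w i := by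
    simp [PiLp.inner_apply, RCLike.inner_apply]
    exact Finset.sum_congr rfl fun i _ => mul_comm _ _
  have hprodval : C * ∏ i, (((s:ℝ):ℂ)⁻¹ * Complex.exp ((c i)^2/(2*(1-4*(A:ℂ)))))
      = Complex.exp (Complex.I * ((⟪x,w⟫ : ℝ) + (b:ℂ))) := by
    rw [Finset.prod_mul_distrib, Finset.prod_const, Finset.card_univ, Fintype.card_fin,
      ← Complex.exp_sum]
    have hsum : ∑ i, (c i)^2/(2*(1-4*(A:ℂ)))
        = ((∑ i, ((w i:ℂ))^2) - ∑ i, ((x i:ℂ))^2)/2 + Complex.I * ∑ i, (x i:ℂ)*(w i:ℂ) := by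
      rw [Finset.sum_congr rfl fun i _ => hc2 i, Finset.sum_add_distrib,
        ← Finset.sum_div, Finset.sum_sub_distrib, Finset.mul_sum]
      congr 1
      exact Finset.sum_congr rfl fun i _ => by ring
    have hKs : ((1-4*A)^((d:ℝ)/2) : ℝ) = s^d := by
      rw [hs_def, Real.sqrt_eq_rpow, ← Real.rpow_natCast ((1-4*A)^((1/2:ℝ))) d,
        ← Real.rpow_mul h14.le]
      congr 1
      push_cast
      ring
    have hconst : ((s^d : ℝ):ℂ) * (((s:ℝ):ℂ))⁻¹^d = 1 := by
      push_cast
      rw [← mul_pow, mul_inv_cancel₀ hsne, one_pow]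
    rw [hsum, hC_def, hKs]
    have hET : Complex.exp (Complex.I*(b:ℂ) + ∑ i, (((x i:ℂ))^2 - ((w i:ℂ))^2)/2)
        * Complex.exp (((∑ i, ((w i:ℂ))^2) - ∑ i, ((x i:ℂ))^2)/2
            + Complex.I * ∑ i, (x i:ℂ)*(w i:ℂ))
        = Complex.exp (Complex.I * ((⟪x,w⟫ : ℝ) + (b:ℂ))) := by
      rw [← Complex.exp_add]
      congr 1
      rw [hinner]
      push_cast
      rw [← Finset.sum_div, Finset.sum_sub_distrib]
      ring
    calc ((s^d : ℝ):ℂ) * Complex.exp (Complex.I*(b:ℂ) + ∑ i, (((x i:ℂ))^2 - ((w i:ℂ))^2)/2)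
          * ((((s:ℝ):ℂ))⁻¹^d * Complex.exp (((∑ i, ((w i:ℂ))^2) - ∑ i, ((x i:ℂ))^2)/2
              + Complex.I * ∑ i, (x i:ℂ)*(w i:ℂ)))
        = (((s^d : ℝ):ℂ) * (((s:ℝ):ℂ))⁻¹^d)
          * (Complex.exp (Complex.I*(b:ℂ) + ∑ i, (((x i:ℂ))^2 - ((w i:ℂ))^2)/2)
            * Complex.exp (((∑ i, ((w i:ℂ))^2) - ∑ i, ((x i:ℂ))^2)/2
              + Complex.I * ∑ i, (x i:ℂ)*(w i:ℂ))) := by ring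
      _ = Complex.exp (Complex.I * ((⟪x,w⟫ : ℝ) + (b:ℂ))) := by
          rw [hconst, hET, one_mul]
  simp_rw [hpt]
  simp_rw [← RCLike.re_to_complex]
  rw [integral_re hInt, hprod]
  rw [Finset.prod_congr rfl fun i _ => hval i]
  rw [hprodval]
  rw [RCLike.re_to_complex, mul_comm, ← Complex.ofReal_add, Complex.exp_ofReal_mul_I_re]
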